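/- Let J_R be any real n×n matrix with n ≥ 1 and let J₂, J₄ be real symmetric n×n matrices such that J₄ is negative semidefinite and there exists κ̄ > 0 with J₂ + κ̄² J₄ negative definite. Then det(−(J_R + κ² J₂ + κ⁴ J₄)) tends to +∞ as κ → +∞. -/

import Mathlib

open Matrix Polynomial


section helpers

variable {n : ℕ}

lemma quad_transpose (M : Matrix (Fin n) (Fin n) ℝ) (x : Fin n → ℝ) :
    x ⬝ᵥ Mᵀ *ᵥ x = x ⬝ᵥ M *ᵥ x := by
  rw [mulVec_transpose, dotProduct_comm, ← dotProduct_mulVec]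

lemma dotProduct_self_pos {x : Fin n → ℝ} (hx : x ≠ 0) : 0 < x ⬝ᵥ x := by
  rcases lt_or_eq_of_le (dotProduct_self_star_nonneg x : 0 ≤ x ⬝ᵥ star x) with h' | h'
  · simpa using h'
  · exact absurd (dotProduct_self_eq_zero.mp (by simpa using h'.symm)) hx

/-- Rayleigh-type lower bound from a lower bound on all eigenvalues. -/
lemma rayleigh_lower (N : Matrix (Fin n) (Fin n) ℝ) (hN : N.IsHermitian) (c : ℝ)
    (hc : ∀ i, c ≤ hN.eigenvalues i) (x : Fin n → ℝ) :
    c * (x ⬝ᵥ x) ≤ x ⬝ᵥ N *ᵥ x := by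
  classical
  set U : Matrix (Fin n) (Fin n) ℝ := (hN.eigenvectorUnitary : Matrix (Fin n) (Fin n) ℝ)
    with hUdef
  have hUU : U * star U = 1 := (Matrix.mem_unitaryGroup_iff).mp hN.eigenvectorUnitary.2
  set y : Fin n → ℝ := star U *ᵥ x with hy
  have hxU : x ᵥ* U = y := by
    rw [hy, Matrix.star_eq_conjTranspose, conjTranspose_eq_transpose_of_trivial,
      mulVec_transpose]
  have hxy : x ⬝ᵥ x = y ⬝ᵥ y := by
    have h1 : y ⬝ᵥ y = (x ᵥ* U) ⬝ᵥ y := by rw [hxU]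
    rw [h1, ← dotProduct_mulVec, hy, mulVec_mulVec, hUU, one_mulVec]
  have hquad : x ⬝ᵥ N *ᵥ x = ∑ i, hN.eigenvalues i * (y i) ^ 2 := by
    conv_lhs => rw [hN.spectral_theorem, Unitary.conjStarAlgAut_apply]
    rw [← hUdef, ← mulVec_mulVec, ← mulVec_mulVec, dotProduct_mulVec, hxU]
    simp only [dotProduct, mulVec_diagonal, Function.comp_apply]
    refine Finset.sum_congr rfl fun i _ => ?_
    have h2 : (RCLike.ofReal (hN.eigenvalues i) : ℝ) = hN.eigenvalues i := rfl
    rw [h2]; ring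
  rw [hquad, hxy, dotProduct, Finset.mul_sum]
  refine Finset.sum_le_sum fun i _ => ?_
  have h3 : y i * y i = y i ^ 2 := by ring
  rw [h3]
  exact mul_le_mul_of_nonneg_right (hc i) (sq_nonneg _)

/-- A real matrix with positive definite quadratic form has positive determinant. -/
lemma det_pos_of_quad_pos (M : Matrix (Fin n) (Fin n) ℝ)
    (h : ∀ x : Fin n → ℝ, x ≠ 0 → 0 < x ⬝ᵥ M *ᵥ x) : 0 < M.det := by
  classical
  obtain ⟨S, hS⟩ : ∃ S : Matrix (Fin n) (Fin n) ℝ, S = (1/2 : ℝ) • (M + Mᵀ) := ⟨_, rfl⟩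
  have hquadS : ∀ x : Fin n → ℝ, x ⬝ᵥ S *ᵥ x = x ⬝ᵥ M *ᵥ x := by
    intro x
    rw [hS, smul_mulVec, dotProduct_smul, add_mulVec, dotProduct_add, quad_transpose,
      smul_eq_mul]
    ring
  have hquadt : ∀ (t : ℝ) (x : Fin n → ℝ), x ⬝ᵥ (S + t • (M - S)) *ᵥ x = x ⬝ᵥ M *ᵥ x := by
    intro t x
    rw [add_mulVec, dotProduct_add, smul_mulVec, dotProduct_smul, sub_mulVec,
      dotProduct_sub, smul_eq_mul, hquadS x]
    ring
  have hdet_ne : ∀ t : ℝ, (S + t • (M - S)).det ≠ 0 := by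
    intro t hdet
    obtain ⟨v, hv, hv0⟩ := (Matrix.exists_mulVec_eq_zero_iff).mpr hdet
    have h4 := hquadt t v
    rw [hv0, dotProduct_zero] at h4
    exact (h v hv).ne' h4.symm
  have hSsym : S.IsHermitian := by
    rw [Matrix.IsHermitian, conjTranspose_eq_transpose_of_trivial, hS, transpose_smul,
      transpose_add, transpose_transpose, add_comm]
  have hSpd : S.PosDef := by
    refine Matrix.posDef_iff_dotProduct_mulVec.mpr ⟨hSsym, fun x hx => ?_⟩
    have hst : star x = x := by simp
    rw [hst, hquadS]
    exact h x hx
  have hg : Continuous fun t : ℝ => (S + t • (M - S)).det :=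
    (continuous_const.add (continuous_id.smul continuous_const)).matrix_det
  by_contra hle
  push_neg at hle
  have hM1 : S + (1:ℝ) • (M - S) = M := by rw [one_smul]; abel
  have h1 : (S + (1:ℝ) • (M - S)).det < 0 := by
    rw [hM1]
    exact lt_of_le_of_ne hle (by simpa [hM1] using hdet_ne 1)
  have h0 : 0 < (S + (0:ℝ) • (M - S)).det := by simpa using hSpd.det_pos
  have hmem : (0:ℝ) ∈ Set.Icc ((S + (1:ℝ) • (M - S)).det) ((S + (0:ℝ) • (M - S)).det) :=
    ⟨le_of_lt h1, le_of_lt h0⟩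
  obtain ⟨t, _, ht⟩ := intermediate_value_Icc' (by norm_num : (0:ℝ) ≤ 1)
    (hg.continuousOn) hmem
  exact hdet_ne t ht

/-- Determinant lower bound for a symmetric matrix with quadratic form bounded below. -/
lemma det_ge_of_quad_ge (A : Matrix (Fin n) (Fin n) ℝ) (hA : A.IsHermitian) (c : ℝ)
    (hc : 0 ≤ c) (h : ∀ x : Fin n → ℝ, c * (x ⬝ᵥ x) ≤ x ⬝ᵥ A *ᵥ x) :
    c ^ n ≤ A.det := by
  classical
  have heig : ∀ i, c ≤ hA.eigenvalues i := by
    intro i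
    have hv := hA.eigenvalues_eq i
    set v : Fin n → ℝ := ⇑(hA.eigenvectorBasis i) with hvdef
    have hstar : star v = v := by simp
    have hnorm : v ⬝ᵥ v = 1 := by
      have h1 : ‖hA.eigenvectorBasis i‖ = 1 := hA.eigenvectorBasis.orthonormal.1 i
      have h2 : v ⬝ᵥ v = @inner ℝ _ _ (hA.eigenvectorBasis i) (hA.eigenvectorBasis i) := by
        rw [EuclideanSpace.inner_eq_star_dotProduct, star_trivial]
      rw [h2, real_inner_self_eq_norm_sq, h1, one_pow]
    have h5 : hA.eigenvalues i = v ⬝ᵥ A *ᵥ v := by rw [hv, hstar]; rfl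
    rw [h5]
    calc c = c * (v ⬝ᵥ v) := by rw [hnorm, mul_one]
      _ ≤ v ⬝ᵥ A *ᵥ v := h v
  have hdet : A.det = ∏ i, hA.eigenvalues i := by
    simpa using hA.det_eq_prod_eigenvalues
  rw [hdet]
  calc c ^ n = ∏ _i : Fin n, c := by rw [Finset.prod_const, Finset.card_univ, Fintype.card_fin]
    _ ≤ ∏ i, hA.eigenvalues i :=
        Finset.prod_le_prod (fun _ _ => hc) (fun i _ => heig i)

/-- From a quadratic-form lower bound, get a determinant lower bound. -/
lemma det_lower_bound (M : Matrix (Fin n) (Fin n) ℝ) (μ : ℝ) (hμ : 0 < μ)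
    (h : ∀ x : Fin n → ℝ, μ * (x ⬝ᵥ x) ≤ x ⬝ᵥ M *ᵥ x) :
    μ ^ n ≤ M.det := by
  classical
  have hquadpos : ∀ x : Fin n → ℝ, x ≠ 0 → 0 < x ⬝ᵥ M *ᵥ x := fun x hx =>
    lt_of_lt_of_le (mul_pos hμ (dotProduct_self_pos hx)) (h x)
  have hdetpos : 0 < M.det := det_pos_of_quad_pos M hquadpos
  have hMtM : ∀ x : Fin n → ℝ, μ ^ 2 * (x ⬝ᵥ x) ≤ x ⬝ᵥ (Mᵀ * M) *ᵥ x := by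
    intro x
    have hkey : x ⬝ᵥ (Mᵀ * M) *ᵥ x = (M *ᵥ x) ⬝ᵥ (M *ᵥ x) := by
      rw [← mulVec_mulVec, dotProduct_mulVec, vecMul_transpose]
    rw [hkey]
    rcases eq_or_ne x 0 with rfl | hx
    · simp
    · have hxx : 0 < x ⬝ᵥ x := dotProduct_self_pos hx
      have hcs : (x ⬝ᵥ (M *ᵥ x)) ^ 2 ≤ (x ⬝ᵥ x) * ((M *ᵥ x) ⬝ᵥ (M *ᵥ x)) := by
        have hc := Finset.sum_mul_sq_le_sq_mul_sq Finset.univ x (M *ᵥ x)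
        have e1 : x ⬝ᵥ x = ∑ i, x i ^ 2 := by simp [dotProduct, pow_two]
        have e2 : (M *ᵥ x) ⬝ᵥ (M *ᵥ x) = ∑ i, (M *ᵥ x) i ^ 2 := by
          simp [dotProduct, pow_two]
        rw [e1, e2]
        exact hc
      have h1 : μ * (x ⬝ᵥ x) ≤ x ⬝ᵥ (M *ᵥ x) := h x
      have h2 : (μ * (x ⬝ᵥ x)) ^ 2 ≤ (x ⬝ᵥ (M *ᵥ x)) ^ 2 :=
        pow_le_pow_left₀ (le_of_lt (mul_pos hμ hxx)) h1 2
      nlinarith [hxx, hcs, h2]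
  have hherm : (Mᵀ * M).IsHermitian := by
    rw [Matrix.IsHermitian, conjTranspose_eq_transpose_of_trivial, transpose_mul,
      transpose_transpose]
  have hdet2 : (μ ^ 2) ^ n ≤ (Mᵀ * M).det :=
    det_ge_of_quad_ge (Mᵀ * M) hherm (μ ^ 2) (by positivity) hMtM
  have hdetMtM : (Mᵀ * M).det = M.det ^ 2 := by rw [det_mul, det_transpose]; ring
  rw [hdetMtM] at hdet2
  have hfin : (μ ^ n) ^ 2 ≤ M.det ^ 2 := by
    calc (μ ^ n) ^ 2 = (μ ^ 2) ^ n := by ring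
      _ ≤ M.det ^ 2 := hdet2
  nlinarith [pow_pos hμ n, hdetpos]

end helpers

/-- Under the assumptions of Lemma 1 (with `n ≥ 1`), the determinant
`det (-(J_R + κ² J₂ + κ⁴ J₄))` tends to `+∞` as `κ → +∞`. -/
theorem stmt5 (n : ℕ) (hn : 1 ≤ n) (JR J2 J4 : Matrix (Fin n) (Fin n) ℝ)
    (hJ2 : J2.IsSymm) (hJ4 : J4.IsSymm)
    (hJ4nsd : ∀ x : Fin n → ℝ, x ⬝ᵥ J4.mulVec x ≤ 0)
    (hκbar : ∃ κbar : ℝ, 0 < κbar ∧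
      ∀ x : Fin n → ℝ, x ≠ 0 → x ⬝ᵥ (J2 + κbar ^ 2 • J4).mulVec x < 0) :
    Filter.Tendsto (fun κ : ℝ => (-(JR + κ ^ 2 • J2 + κ ^ 4 • J4)).det)
      Filter.atTop Filter.atTop := by
  classical
  obtain ⟨κb, hκb, hND⟩ := hκbar
  have hne : Nonempty (Fin n) := Fin.pos_iff_nonempty.mp (by omega)
  set N : Matrix (Fin n) (Fin n) ℝ := -(J2 + κb ^ 2 • J4) with hNdef
  have hNherm : N.IsHermitian := by
    rw [Matrix.IsHermitian, conjTranspose_eq_transpose_of_trivial, hNdef, transpose_neg,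
      transpose_add, transpose_smul, hJ2.eq, hJ4.eq]
  have hNquad : ∀ x : Fin n → ℝ, x ⬝ᵥ N *ᵥ x = -(x ⬝ᵥ (J2 + κb ^ 2 • J4) *ᵥ x) := by
    intro x
    rw [hNdef, neg_mulVec, dotProduct_neg]
  have hNpd : N.PosDef := by
    refine Matrix.posDef_iff_dotProduct_mulVec.mpr ⟨hNherm, fun x hx => ?_⟩
    have hst : star x = x := by simp
    rw [hst, hNquad]
    exact neg_pos.mpr (hND x hx)
  set c : ℝ := Finset.univ.inf' (Finset.univ_nonempty) hNherm.eigenvalues with hcdef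
  have hc_pos : 0 < c := by
    obtain ⟨i, -, hi⟩ := Finset.exists_mem_eq_inf' (Finset.univ_nonempty) hNherm.eigenvalues
    rw [hcdef, hi]
    exact hNpd.eigenvalues_pos i
  have hray : ∀ x : Fin n → ℝ, c * (x ⬝ᵥ x) ≤ x ⬝ᵥ N *ᵥ x :=
    rayleigh_lower N hNherm c (fun i => Finset.inf'_le _ (Finset.mem_univ i))
  set C : ℝ := ∑ i, ∑ j, |JR i j| with hCdef
  have hC : ∀ x : Fin n → ℝ, x ⬝ᵥ JR *ᵥ x ≤ C * (x ⬝ᵥ x) := by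
    intro x
    have hsq : ∀ i : Fin n, x i ^ 2 ≤ x ⬝ᵥ x := by
      intro i
      have h1 := Finset.single_le_sum (f := fun k => x k * x k)
        (fun k _ => mul_self_nonneg (x k)) (Finset.mem_univ i)
      simpa [dotProduct, pow_two] using h1
    have hterm : ∀ i j : Fin n, x i * (JR i j * x j) ≤ |JR i j| * (x ⬝ᵥ x) := by
      intro i j
      have habs : |x i * x j| ≤ x ⬝ᵥ x := by
        rw [abs_mul]
        nlinarith [hsq i, hsq j, sq_nonneg (|x i| - |x j|), sq_abs (x i), sq_abs (x j),
          abs_nonneg (x i), abs_nonneg (x j)]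
      calc x i * (JR i j * x j) = JR i j * (x i * x j) := by ring
        _ ≤ |JR i j * (x i * x j)| := le_abs_self _
        _ = |JR i j| * |x i * x j| := abs_mul _ _
        _ ≤ |JR i j| * (x ⬝ᵥ x) := mul_le_mul_of_nonneg_left habs (abs_nonneg _)
    calc x ⬝ᵥ JR *ᵥ x = ∑ i, ∑ j, x i * (JR i j * x j) := by
          simp [dotProduct, Matrix.mulVec, Finset.mul_sum]
      _ ≤ ∑ i, ∑ j, |JR i j| * (x ⬝ᵥ x) :=
          Finset.sum_le_sum fun i _ => Finset.sum_le_sum fun j _ => hterm i j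
      _ = C * (x ⬝ᵥ x) := by rw [hCdef, Finset.sum_mul]; simp [Finset.sum_mul]
  -- quadratic lower bound for large κ
  have hquad : ∀ κ : ℝ, κb ≤ κ → ∀ x : Fin n → ℝ,
      (c * κ ^ 2 - C) * (x ⬝ᵥ x) ≤ x ⬝ᵥ (-(JR + κ ^ 2 • J2 + κ ^ 4 • J4)) *ᵥ x := by
    intro κ hκ x
    have hexp : x ⬝ᵥ (-(JR + κ ^ 2 • J2 + κ ^ 4 • J4)) *ᵥ x
        = -(x ⬝ᵥ JR *ᵥ x) - κ ^ 2 * (x ⬝ᵥ J2 *ᵥ x) - κ ^ 4 * (x ⬝ᵥ J4 *ᵥ x) := by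
      rw [neg_mulVec, dotProduct_neg, add_mulVec, add_mulVec, smul_mulVec,
        smul_mulVec, dotProduct_add, dotProduct_add, dotProduct_smul, dotProduct_smul,
        smul_eq_mul, smul_eq_mul]
      ring
    have hNexp : x ⬝ᵥ N *ᵥ x = -(x ⬝ᵥ J2 *ᵥ x) - κb ^ 2 * (x ⬝ᵥ J4 *ᵥ x) := by
      rw [hNquad, add_mulVec, smul_mulVec, dotProduct_add, dotProduct_smul, smul_eq_mul]
      ring
    have h1 : κ ^ 2 * (c * (x ⬝ᵥ x)) ≤ κ ^ 2 * (x ⬝ᵥ N *ᵥ x) :=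
      mul_le_mul_of_nonneg_left (hray x) (sq_nonneg κ)
    have h2 : 0 ≤ (κ ^ 4 - κ ^ 2 * κb ^ 2) * (-(x ⬝ᵥ J4 *ᵥ x)) := by
      apply mul_nonneg
      · have hκ2 : κb ^ 2 ≤ κ ^ 2 := by nlinarith [hκb.le, hκ]
        nlinarith [sq_nonneg κ, hκ2]
      · linarith [hJ4nsd x]
    have h3 := hC x
    rw [hexp]
    rw [hNexp] at h1
    nlinarith [h1, h2, h3]
  -- conclude
  have hμtend : Filter.Tendsto (fun κ : ℝ => c * κ ^ 2 - C) Filter.atTop Filter.atTop := by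
    have h1 : Filter.Tendsto (fun κ : ℝ => κ ^ 2) Filter.atTop Filter.atTop :=
      Filter.tendsto_pow_atTop two_ne_zero
    have h2 := (h1.const_mul_atTop hc_pos)
    simpa [sub_eq_add_neg] using Filter.tendsto_atTop_add_const_right Filter.atTop (-C) h2
  have hbig : ∀ᶠ κ : ℝ in Filter.atTop,
      (c * κ ^ 2 - C) ^ n ≤ (-(JR + κ ^ 2 • J2 + κ ^ 4 • J4)).det := by
    filter_upwards [Filter.eventually_ge_atTop κb, hμtend.eventually_gt_atTop 0]
      with κ hκ hμpos
    exact det_lower_bound _ _ hμpos (hquad κ hκ)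
  exact Filter.tendsto_atTop_mono' _ hbig
    (((Filter.tendsto_pow_atTop (by omega : n ≠ 0)).comp hμtend))
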